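/- Let $\mathcal{H}$ be a real Hilbert space, $F\subseteq\mathcal{H}$ nonempty, $(x_n)_{n\geq 1}$ a sequence such that $\lim_{n\to\infty}\|x_n-x\|$ exists for every $x\in F$, $(\lambda_k)_{k\geq 1}$ positive reals with $\sum_{k\geq 1}\lambda_k=+\infty$, and define $z_n=\tau_n^{-1}\sum_{k=1}^n\lambda_k x_k$ with $\tau_n=\sum_{k=1}^n\lambda_k$. If every sequential weak cluster point of $(z_n)$ lies in $F$, then $(z_n)$ converges weakly to an element of $F$. -/

import Mathlib

open Filter Topology
open scoped RealInnerProductSpace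

/-- `x` is the weak limit of the sequence `xs` in a real Hilbert space. -/
def WeakLimit {H : Type*} [NormedAddCommGroup H] [InnerProductSpace ℝ H]
    (xs : ℕ → H) (x : H) : Prop :=
  ∀ y : H, Tendsto (fun n => ⟪xs n, y⟫) atTop (𝓝 ⟪x, y⟫)

/-- `x` is a sequential weak cluster point of the sequence `xs`. -/
def WeakClusterPt {H : Type*} [NormedAddCommGroup H] [InnerProductSpace ℝ H]
    (xs : ℕ → H) (x : H) : Prop :=
  ∃ σ : ℕ → ℕ, StrictMono σ ∧ WeakLimit (xs ∘ σ) x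

lemma weighted_cesaro (lam : ℕ → ℝ) (hlam : ∀ k, 1 ≤ k → 0 < lam k)
    (τ : ℕ → ℝ) (hτ : ∀ n, τ n = ∑ k ∈ Finset.Icc 1 n, lam k)
    (hdiv : Tendsto τ atTop atTop) (a : ℕ → ℝ) (c : ℝ) (ha : Tendsto a atTop (𝓝 c)) :
    Tendsto (fun n => (τ n)⁻¹ * ∑ k ∈ Finset.Icc 1 n, lam k * a k) atTop (𝓝 c) := by
  set g : ℕ → ℝ := fun k => if k = 0 then 0 else lam k with hg
  have hg0 : 0 ≤ g := by
    intro k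
    by_cases h : k = 0
    · simp [hg, h]
    · simp only [hg, if_neg h, Pi.zero_apply]
      exact (hlam k (by omega)).le
  have hins : ∀ n : ℕ, Finset.range (n + 1) = insert 0 (Finset.Icc 1 n) := by
    intro n; ext i
    simp only [Finset.mem_range, Finset.mem_insert, Finset.mem_Icc]
    omega
  have hsum : ∀ (F : ℕ → ℝ) (n : ℕ),
      ∑ i ∈ Finset.range (n + 1), (if i = 0 then 0 else F i) = ∑ k ∈ Finset.Icc 1 n, F k := by
    intro F n
    rw [hins n, Finset.sum_insert (by simp), if_pos rfl, zero_add]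
    refine Finset.sum_congr rfl fun i hi => ?_
    rw [if_neg]
    have := Finset.mem_Icc.1 hi
    omega
  have hGsum : ∀ n, ∑ i ∈ Finset.range (n + 1), g i = τ n := by
    intro n; rw [hτ]; exact hsum lam n
  have hG : Tendsto (fun n => ∑ i ∈ Finset.range n, g i) atTop atTop := by
    apply Tendsto.congr' _ (hdiv.comp (tendsto_sub_atTop_nat 1))
    filter_upwards [eventually_ge_atTop 1] with n hn
    match n, hn with
    | (m + 1), _ =>
      simp only [Function.comp_apply, Nat.add_sub_cancel]
      exact (hGsum m).symm
  have hao : Tendsto (fun k => a k - c) atTop (𝓝 0) := by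
    simpa using ha.sub_const c
  have hfo : (fun k => g k * (a k - c)) =o[atTop] g := by
    have h1 : (fun k => a k - c) =o[atTop] (fun _ : ℕ => (1 : ℝ)) :=
      (Asymptotics.isLittleO_one_iff ℝ).2 hao
    have := (Asymptotics.isBigO_refl g atTop).mul_isLittleO h1
    simpa using this
  have hkey := (hfo.sum_range hg0 hG).tendsto_div_nhds_zero
  have hkey2 : Tendsto (fun n => (∑ k ∈ Finset.Icc 1 n, lam k * (a k - c)) / τ n)
      atTop (𝓝 0) := by
    have h2 := hkey.comp (tendsto_add_atTop_nat 1)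
    refine h2.congr fun n => ?_
    simp only [Function.comp_apply]
    have e : ∑ i ∈ Finset.range (n + 1), g i * (a i - c)
        = ∑ i ∈ Finset.range (n + 1), (if i = 0 then 0 else lam i * (a i - c)) := by
      refine Finset.sum_congr rfl fun i _ => ?_
      by_cases h : i = 0 <;> simp [hg, h]
    rw [e, hsum (fun k => lam k * (a k - c)) n, hGsum n]
  have hfin : ∀ᶠ n in atTop,
      (∑ k ∈ Finset.Icc 1 n, lam k * (a k - c)) / τ n + c
      = (τ n)⁻¹ * ∑ k ∈ Finset.Icc 1 n, lam k * a k := by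
    filter_upwards [hdiv.eventually_gt_atTop 0] with n hτn
    have hne : τ n ≠ 0 := ne_of_gt hτn
    have h1 : ∑ k ∈ Finset.Icc 1 n, lam k * a k
        = (∑ k ∈ Finset.Icc 1 n, lam k * (a k - c)) + c * τ n := by
      rw [hτ, Finset.mul_sum, ← Finset.sum_add_distrib]
      exact Finset.sum_congr rfl fun k _ => by ring
    rw [h1]
    field_simp
  have h3 := hkey2.add_const c
  rw [zero_add] at h3
  exact Tendsto.congr' hfin h3

lemma exists_weak_subseq {H : Type*} [NormedAddCommGroup H] [InnerProductSpace ℝ H]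
    [CompleteSpace H] (K : Submodule ℝ H) (hKc : IsClosed (K : Set H))
    (hsep : TopologicalSpace.IsSeparable (K : Set H))
    (u : ℕ → H) (M : ℝ) (hM : ∀ n, ‖u n‖ ≤ M) (hu : ∀ n, u n ∈ K) :
    ∃ p : H, ∃ φ : ℕ → ℕ, StrictMono φ ∧ WeakLimit (u ∘ φ) p := by
  have hM0 : 0 ≤ M := (norm_nonneg (u 0)).trans (hM 0)
  obtain ⟨c, hcc, hcd⟩ := hsep
  obtain ⟨D, hD⟩ := (hcc.insert (0 : H)).exists_eq_range (Set.insert_nonempty _ _)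
  have hKD : (K : Set H) ⊆ closure (Set.range D) := by
    rw [← hD]
    exact hcd.trans (closure_mono (Set.subset_insert _ _))
  set S : Set (ℕ → ℝ) := Set.univ.pi fun k => Set.Icc (-(M * ‖D k‖)) (M * ‖D k‖) with hSdef
  have hS : IsCompact S := isCompact_univ_pi fun k => isCompact_Icc
  set v : ℕ → ℕ → ℝ := fun n k => ⟪u n, D k⟫ with hvdef
  have hv : ∀ n, v n ∈ S := by
    intro n
    rw [hSdef, Set.mem_univ_pi]
    intro k
    have h1 : |⟪u n, D k⟫| ≤ M * ‖D k‖ :=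
      (abs_real_inner_le_norm (u n) (D k)).trans
        (mul_le_mul_of_nonneg_right (hM n) (norm_nonneg _))
    exact ⟨neg_le_of_abs_le h1, le_of_abs_le h1⟩
  obtain ⟨a, -, φ, hφ, hconv⟩ := hS.tendsto_subseq hv
  have hk : ∀ k, Tendsto (fun n => ⟪u (φ n), D k⟫) atTop (𝓝 (a k)) := by
    intro k
    exact tendsto_pi_nhds.1 hconv k
  haveI : CompleteSpace K := hKc.completeSpace_coe
  have key : ∀ y : H, ∃ L : ℝ, Tendsto (fun n => ⟪u (φ n), y⟫) atTop (𝓝 L) := by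
    intro y
    set w : H := (K.orthogonalProjectionOnto y : H) with hwdef
    have hwK : w ∈ K := (K.orthogonalProjectionOnto y).2
    have hyw : ∀ n : ℕ, ⟪u (φ n), y⟫ = ⟪u (φ n), w⟫ := by
      intro n
      have h1 : y - w ∈ Kᗮ := Submodule.sub_starProjection_mem_orthogonal (K := K) y
      have h2 : ⟪u (φ n), y - w⟫ = 0 :=
        (Submodule.mem_orthogonal K (y - w)).1 h1 _ (hu (φ n))
      rw [inner_sub_right] at h2
      linarith
    have hcau : CauchySeq fun n => ⟪u (φ n), w⟫ := by
      rw [Metric.cauchySeq_iff]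
      intro ε hε
      have hδ : 0 < ε / (4 * (M + 1)) := by positivity
      obtain ⟨d, hd, hdist⟩ := Metric.mem_closure_iff.1 (hKD hwK) _ hδ
      obtain ⟨k, rfl⟩ := hd
      obtain ⟨N, hN⟩ := Metric.cauchySeq_iff.1 (hk k).cauchySeq (ε / 2) (by positivity)
      refine ⟨N, fun m hm n hn => ?_⟩
      have e1 : dist ⟪u (φ m), w⟫ ⟪u (φ n), w⟫ = |⟪u (φ m) - u (φ n), w⟫| := by
        rw [Real.dist_eq, inner_sub_left]
      have e2 : ⟪u (φ m) - u (φ n), w⟫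
          = ⟪u (φ m) - u (φ n), D k⟫ + ⟪u (φ m) - u (φ n), w - D k⟫ := by
        rw [inner_sub_right]; ring
      have e3 : |⟪u (φ m) - u (φ n), D k⟫| < ε / 2 := by
        have := hN m hm n hn
        rwa [Real.dist_eq, ← inner_sub_left] at this
      have e4 : |⟪u (φ m) - u (φ n), w - D k⟫| ≤ (2 * M) * (ε / (4 * (M + 1))) := by
        refine (abs_real_inner_le_norm _ _).trans ?_
        have h5 : ‖u (φ m) - u (φ n)‖ ≤ 2 * M := by
          have := norm_sub_le (u (φ m)) (u (φ n))
          have := hM (φ m); have := hM (φ n); linarith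
        have h6 : ‖w - D k‖ ≤ ε / (4 * (M + 1)) := by
          rw [← dist_eq_norm]; exact hdist.le
        exact mul_le_mul h5 h6 (norm_nonneg _) (by positivity)
      have h7 : (2 * M) * (ε / (4 * (M + 1))) ≤ ε / 2 := by
        rw [← mul_div_assoc, div_le_div_iff₀ (by positivity) (by norm_num : (0:ℝ) < 2)]
        nlinarith
      calc dist ⟪u (φ m), w⟫ ⟪u (φ n), w⟫
          = |⟪u (φ m) - u (φ n), w⟫| := e1
        _ ≤ |⟪u (φ m) - u (φ n), D k⟫| + |⟪u (φ m) - u (φ n), w - D k⟫| := by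
            rw [e2]; exact abs_add_le _ _
        _ < ε / 2 + ε / 2 := by
            have := e4.trans h7
            linarith
        _ = ε := by ring
    obtain ⟨L, hL⟩ := cauchySeq_tendsto_of_complete hcau
    refine ⟨L, ?_⟩
    have : (fun n => ⟪u (φ n), y⟫) = fun n => ⟪u (φ n), w⟫ := funext hyw
    rw [this]; exact hL
  choose f hf using key
  have hadd : ∀ y y', f (y + y') = f y + f y' := by
    intro y y'
    refine tendsto_nhds_unique (hf (y + y')) ?_
    have := (hf y).add (hf y')
    simpa [inner_add_right] using this
  have hsmul : ∀ (r : ℝ) (y : H), f (r • y) = r * f y := by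
    intro r y
    refine tendsto_nhds_unique (hf (r • y)) ?_
    have := (hf y).const_mul r
    simpa [real_inner_smul_right, mul_comm] using this
  have hbound : ∀ y, ‖f y‖ ≤ M * ‖y‖ := by
    intro y
    rw [Real.norm_eq_abs]
    refine le_of_tendsto' (hf y).abs fun n => ?_
    exact (abs_real_inner_le_norm _ _).trans
      (mul_le_mul_of_nonneg_right (hM (φ n)) (norm_nonneg _))
  set Lm : H →ₗ[ℝ] ℝ :=
    { toFun := f, map_add' := hadd, map_smul' := hsmul } with hLm
  set fc : H →L[ℝ] ℝ := Lm.mkContinuous M hbound with hfc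
  set p : H := (InnerProductSpace.toDual ℝ H).symm fc with hp
  refine ⟨p, φ, hφ, fun y => ?_⟩
  have hpy : ⟪p, y⟫ = f y := by
    rw [hp]
    exact InnerProductSpace.toDual_symm_apply
  rw [hpy]
  exact hf y

/-- Opial–Passty lemma: weak convergence of weighted ergodic averages. -/
theorem opial_passty_lemma {H : Type*} [NormedAddCommGroup H] [InnerProductSpace ℝ H]
    [CompleteSpace H] (F : Set H) (hF : F.Nonempty) (xs : ℕ → H) (lam : ℕ → ℝ)
    (hlam : ∀ k, 1 ≤ k → 0 < lam k)
    (τ : ℕ → ℝ) (hτ : ∀ n, τ n = ∑ k ∈ Finset.Icc 1 n, lam k)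
    (hdiv : Tendsto τ atTop atTop)
    (z : ℕ → H) (hz : ∀ n, z n = (τ n)⁻¹ • ∑ k ∈ Finset.Icc 1 n, lam k • xs k)
    (hfejer : ∀ x ∈ F, ∃ l : ℝ, Tendsto (fun n => ‖xs n - x‖) atTop (𝓝 l))
    (hclust : ∀ x : H, WeakClusterPt z x → x ∈ F) :
    ∃ x ∈ F, WeakLimit z x := by
  classical
  obtain ⟨x₀, hx₀⟩ := hF
  obtain ⟨l₀, hl₀⟩ := hfejer x₀ hx₀
  obtain ⟨B, hB⟩ := hl₀.bddAbove_range
  set C : ℝ := B + ‖x₀‖ with hC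
  have hxsC : ∀ n, ‖xs n‖ ≤ C := by
    intro n
    have h1 : ‖xs n - x₀‖ ≤ B := hB (Set.mem_range_self n)
    have h2 := norm_sub_norm_le (xs n) x₀
    rw [hC]; linarith
  have hC0 : 0 ≤ C := (norm_nonneg (xs 0)).trans (hxsC 0)
  have hτpos : ∀ n, 1 ≤ n → 0 < τ n := by
    intro n hn
    rw [hτ]
    exact Finset.sum_pos (fun k hk => hlam k (Finset.mem_Icc.1 hk).1)
      ⟨1, Finset.mem_Icc.2 ⟨le_refl 1, hn⟩⟩
  have hzC : ∀ n, ‖z n‖ ≤ C := by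
    intro n
    rcases Nat.eq_zero_or_pos n with rfl | hn
    · rw [hz]
      rw [show Finset.Icc 1 0 = (∅ : Finset ℕ) from Finset.Icc_eq_empty (by omega)]
      simpa using hC0
    · have hpos := hτpos n hn
      rw [hz, norm_smul]
      have h1 : ‖∑ k ∈ Finset.Icc 1 n, lam k • xs k‖ ≤ τ n * C := by
        refine (norm_sum_le _ _).trans ?_
        rw [hτ, Finset.sum_mul]
        refine Finset.sum_le_sum fun k hk => ?_
        rw [norm_smul, Real.norm_eq_abs, abs_of_pos (hlam k (Finset.mem_Icc.1 hk).1)]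
        exact mul_le_mul_of_nonneg_left (hxsC k) (hlam k (Finset.mem_Icc.1 hk).1).le
      have h2 : ‖(τ n)⁻¹‖ = (τ n)⁻¹ := by
        rw [Real.norm_eq_abs, abs_of_pos (inv_pos.2 hpos)]
      rw [h2]
      calc (τ n)⁻¹ * ‖∑ k ∈ Finset.Icc 1 n, lam k • xs k‖
          ≤ (τ n)⁻¹ * (τ n * C) := by
            exact mul_le_mul_of_nonneg_left h1 (inv_pos.2 hpos).le
        _ = C := by field_simp
  set K := (Submodule.span ℝ (Set.range xs)).topologicalClosure with hK
  have hKc : IsClosed (K : Set H) := Submodule.isClosed_topologicalClosure _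
  have hKsep : TopologicalSpace.IsSeparable (K : Set H) := by
    have h1 : TopologicalSpace.IsSeparable (Set.range xs) :=
      (Set.countable_range xs).isSeparable
    have h2 := (h1.span (R := ℝ)).closure
    rwa [hK, Submodule.topologicalClosure_coe]
  have hzK : ∀ n, z n ∈ K := by
    intro n
    rw [hz]
    refine Submodule.smul_mem _ _ (Submodule.sum_mem _ fun k _ => Submodule.smul_mem _ _ ?_)
    exact Submodule.le_topologicalClosure _ (Submodule.subset_span (Set.mem_range_self k))
  have hPassty : ∀ x ∈ F, ∀ x' ∈ F, ∃ cc : ℝ,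
      Tendsto (fun n => ⟪z n, x - x'⟫) atTop (𝓝 cc) := by
    intro x hx x' hx'
    obtain ⟨l, hl⟩ := hfejer x hx
    obtain ⟨l', hl'⟩ := hfejer x' hx'
    set a : ℕ → ℝ := fun k => ⟪xs k, x - x'⟫ with haa
    have hconv : Tendsto a atTop (𝓝 ((l' ^ 2 - l ^ 2 + ‖x‖ ^ 2 - ‖x'‖ ^ 2) / 2)) := by
      have h4 : Tendsto (fun k => (‖xs k - x'‖ ^ 2 - ‖xs k - x‖ ^ 2 + ‖x‖ ^ 2 - ‖x'‖ ^ 2) / 2)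
          atTop (𝓝 ((l' ^ 2 - l ^ 2 + ‖x‖ ^ 2 - ‖x'‖ ^ 2) / 2)) :=
        ((((hl'.pow 2).sub (hl.pow 2)).add_const (‖x‖ ^ 2)).sub_const (‖x'‖ ^ 2)).div_const 2
      refine h4.congr fun k => ?_
      have e1 := norm_sub_sq_real (xs k) x
      have e2 := norm_sub_sq_real (xs k) x'
      have e3 : a k = ⟪xs k, x⟫ - ⟪xs k, x'⟫ := inner_sub_right _ _ _
      rw [e3]
      linarith
    have h5 := weighted_cesaro lam hlam τ hτ hdiv a _ hconv
    refine ⟨_, h5.congr fun n => ?_⟩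
    rw [hz, real_inner_smul_left, sum_inner]
    congr 1
    exact Finset.sum_congr rfl fun k _ => (real_inner_smul_left _ _ _).symm
  have huniq : ∀ p q : H, WeakClusterPt z p → WeakClusterPt z q → p = q := by
    intro p q hp hq
    have hpF := hclust p hp
    have hqF := hclust q hq
    obtain ⟨cc, hcc⟩ := hPassty p hpF q hqF
    obtain ⟨σp, hσp, hwp⟩ := hp
    obtain ⟨σq, hσq, hwq⟩ := hq
    have h1 : ⟪p, p - q⟫ = cc :=
      tendsto_nhds_unique (hwp (p - q)) (hcc.comp hσp.tendsto_atTop)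
    have h2 : ⟪q, p - q⟫ = cc :=
      tendsto_nhds_unique (hwq (p - q)) (hcc.comp hσq.tendsto_atTop)
    have h3 : ⟪p - q, p - q⟫ = (0 : ℝ) := by
      rw [inner_sub_left, h1, h2]; ring
    exact sub_eq_zero.1 (inner_self_eq_zero.1 h3)
  obtain ⟨p, φ, hφ, hwl⟩ := exists_weak_subseq K hKc hKsep z C hzC hzK
  have hpcl : WeakClusterPt z p := ⟨φ, hφ, hwl⟩
  refine ⟨p, hclust p hpcl, ?_⟩
  intro y
  apply tendsto_of_subseq_tendsto
  intro ns hns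
  obtain ⟨ψ, hψ, hnsψ⟩ := strictMono_subseq_of_tendsto_atTop hns
  obtain ⟨q, φ', hφ', hwl'⟩ := exists_weak_subseq K hKc hKsep (z ∘ ns ∘ ψ) C
    (fun n => hzC _) (fun n => hzK _)
  have hmono : StrictMono (ns ∘ (ψ ∘ φ')) := hnsψ.comp hφ'
  have hqcl : WeakClusterPt z q := ⟨ns ∘ (ψ ∘ φ'), hmono, hwl'⟩
  have hq : q = p := huniq q p hqcl hpcl
  refine ⟨ψ ∘ φ', ?_⟩
  have h6 := hwl' y
  rw [hq] at h6
  exact h6
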